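/- For any prime p and any integer s ≥ 2, the sum ∑_{k = p^s - p^{s-1} - 1}^{p^s - 1} C(k, p^s - p^{s-1} - 1) is congruent to p modulo p². -/

import Mathlib

-- Lucas-based lemma: C(p^s - 1, p^(s-1) - 1) ≡ 1 mod p
lemma aux_choose_mod (p : ℕ) (hp : p.Prime) : ∀ s : ℕ, 1 ≤ s →
    (p ^ s - 1).choose (p ^ (s - 1) - 1) % p = 1 := by
  have : Fact p.Prime := ⟨hp⟩
  have hp1 : 1 < p := hp.one_lt
  intro s
  induction s with
  | zero => omega
  | succ s ih =>
    intro _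
    have hdecomp : ∀ t : ℕ, (p ^ (t + 1) - 1) % p = p - 1 ∧ (p ^ (t + 1) - 1) / p = p ^ t - 1 := by
      intro t
      have h1 : p ^ (t + 1) = p * p ^ t := by ring
      have h2 : 1 ≤ p ^ t := Nat.one_le_pow _ _ (by omega)
      have h4 : p * (p ^ t - 1) = p * p ^ t - p := by rw [Nat.mul_sub, Nat.mul_one]
      have h3 : p ^ (t + 1) - 1 = p * (p ^ t - 1) + (p - 1) := by
        rw [h1, h4]; have := Nat.mul_le_mul_left p h2; omega
      constructor
      · rw [h3, Nat.mul_add_mod]; exact Nat.mod_eq_of_lt (by omega)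
      · rw [h3, Nat.mul_add_div (by omega : 0 < p), Nat.div_eq_of_lt (by omega)]; omega
    rcases Nat.eq_or_lt_of_le (show 1 ≤ s + 1 by omega) with h | h
    · -- s + 1 = 1, i.e. s = 0
      have hs0 : s = 0 := by omega
      subst hs0
      simp [Nat.choose, Nat.mod_eq_of_lt hp1]
    · -- s ≥ 1
      have hs1 : 1 ≤ s := by omega
      have key := Choose.choose_modEq_choose_mod_mul_choose_div_nat
        (p := p) (n := p ^ (s + 1) - 1) (k := p ^ s - 1)
      have hn := hdecomp s
      obtain ⟨s', rfl⟩ : ∃ s', s = s' + 1 := ⟨s - 1, by omega⟩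
      have hk := hdecomp s'
      rw [Nat.ModEq] at key
      simp only [Nat.add_sub_cancel] at ih ⊢
      rw [key, hn.1, hn.2, hk.1, hk.2, Nat.choose_self]
      rw [Nat.mul_mod, ih hs1]
      simp [Nat.mod_eq_of_lt hp1]

theorem stmt_9 (p : ℕ) (hp : p.Prime) (s : ℕ) (hs : 2 ≤ s) :
    ((∑ k ∈ Finset.Icc (p ^ s - p ^ (s - 1) - 1) (p ^ s - 1),
        k.choose (p ^ s - p ^ (s - 1) - 1) : ℕ) : ZMod (p ^ 2)) = (p : ZMod (p ^ 2)) := by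
  have hp1 : 1 < p := hp.one_lt
  have hlt : p ^ (s - 1) < p ^ s := Nat.pow_lt_pow_right hp1 (by omega)
  have hple : 1 ≤ p ^ (s - 1) := Nat.one_le_pow _ _ (by omega)
  have hkey : p ^ s = p * p ^ (s - 1) := by
    rw [← pow_succ']
    congr 1
    omega
  -- hockey stick
  rw [Nat.sum_Icc_choose]
  have h1 : p ^ s - 1 + 1 = p ^ s := by omega
  have h2 : p ^ s - p ^ (s - 1) - 1 + 1 = p ^ s - p ^ (s - 1) := by omega
  rw [h1, h2, Nat.choose_symm (by omega)]
  -- identity: p^s * C(p^s - 1, p^(s-1) - 1) = C(p^s, p^(s-1)) * p^(s-1)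
  set c := (p ^ s - 1).choose (p ^ (s - 1) - 1) with hc
  have hid : p ^ s * c = (p ^ s).choose (p ^ (s - 1)) * p ^ (s - 1) := by
    have := Nat.add_one_mul_choose_eq (p ^ s - 1) (p ^ (s - 1) - 1)
    have e1 : p ^ s - 1 + 1 = p ^ s := by omega
    have e2 : p ^ (s - 1) - 1 + 1 = p ^ (s - 1) := by omega
    rw [e1, e2] at this
    exact this
  have hchoose : (p ^ s).choose (p ^ (s - 1)) = p * c := by
    have : (p ^ s).choose (p ^ (s - 1)) * p ^ (s - 1) = (p * c) * p ^ (s - 1) := by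
      rw [← hid, hkey]; ring
    exact Nat.eq_of_mul_eq_mul_right (by omega) this
  have hcm : c % p = 1 := aux_choose_mod p hp s (by omega)
  have hcdecomp : c = p * (c / p) + 1 := by
    conv_lhs => rw [← Nat.div_add_mod c p, hcm]
  rw [hchoose, hcdecomp]
  push_cast
  have : ((p : ZMod (p ^ 2)) * p) = 0 := by
    have := ZMod.natCast_self (p ^ 2)
    push_cast at this
    rw [← this]; ring
  rw [mul_add, mul_one, ← mul_assoc, this]
  ring
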